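/- (Main identifiability theorem.) Let V be finite with |V| ≥ 3, ξ, ξ̂ ∈ (0,1), and π, π̂ permutations of V. Suppose S(p, ξ, π) = S(p, ξ̂, π̂) for all probability distributions p on V outside a set of measure zero in the simplex Δ(V). Then either (i) π = π̂ and ξ = ξ̂, or (ii) π = reverse(π̂) and ξ = 1 − ξ̂. -/

import Mathlib

open Finset MeasureTheory
open scoped Classical

variable {V : Type*}

/-- Cumulative sum of probabilities of the first `k` tokens under permutation `π`. -/
noncomputable def cdf [Fintype V] (p : V → ℝ) (π : Fin (Fintype.card V) ≃ V) (k : ℕ) : ℝ :=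
  ∑ i ∈ Finset.univ.filter (fun i : Fin (Fintype.card V) => (i : ℕ) < k), p (π i)

/-- The least index `k` (if any) such that `C_{k+1} ≥ ξ` (0-indexed). -/
noncomputable def selIdx [Fintype V] (p : V → ℝ) (ξ : ℝ)
    (π : Fin (Fintype.card V) ≃ V) : Option (Fin (Fintype.card V)) :=
  let s := Finset.univ.filter (fun k : Fin (Fintype.card V) => ξ ≤ cdf p π ((k : ℕ) + 1))
  if h : s.Nonempty then some (s.min' h) else none

/-- The inverse-transform-sampling selection function `S(p, ξ, π)`. -/
noncomputable def sel [Fintype V] [Nonempty V] (p : V → ℝ) (ξ : ℝ)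
    (π : Fin (Fintype.card V) ≃ V) : V :=
  ((selIdx p ξ π).map π).getD (Classical.arbitrary V)

/-- The reversed permutation: `reverse(π)(i) = π(n+1-i)` (1-indexed). -/
def revp [Fintype V] (π : Fin (Fintype.card V) ≃ V) : Fin (Fintype.card V) ≃ V :=
  Fin.revPerm.trans π

lemma aux_cdf_mono [Fintype V] (p : V → ℝ) (hp : ∀ v, 0 ≤ p v)
    (π : Fin (Fintype.card V) ≃ V) {a b : ℕ} (hab : a ≤ b) : cdf p π a ≤ cdf p π b := by
  apply Finset.sum_le_sum_of_subset_of_nonneg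
  · intro i hi
    simp only [Finset.mem_filter, Finset.mem_univ, true_and] at *
    omega
  · exact fun i _ _ => hp _

lemma aux_sel_eq [Fintype V] [Nonempty V] (p : V → ℝ) (hp : ∀ v, 0 ≤ p v) (ξ : ℝ)
    (π : Fin (Fintype.card V) ≃ V) (k₀ : Fin (Fintype.card V))
    (h1 : cdf p π (k₀ : ℕ) < ξ) (h2 : ξ ≤ cdf p π ((k₀ : ℕ) + 1)) :
    sel p ξ π = π k₀ := by
  set s := Finset.univ.filter (fun k : Fin (Fintype.card V) => ξ ≤ cdf p π ((k : ℕ) + 1)) with hs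
  have hk₀s : k₀ ∈ s := by simp [hs, h2]
  have hne : s.Nonempty := ⟨k₀, hk₀s⟩
  have hmin : s.min' hne = k₀ := by
    refine le_antisymm (Finset.min'_le _ _ hk₀s) (Finset.le_min' _ _ _ ?_)
    intro y hy
    by_contra hlt
    push_neg at hlt
    have hy1 : (y : ℕ) + 1 ≤ (k₀ : ℕ) := by
      have := (Fin.lt_def).1 hlt
      omega
    have h3 : cdf p π ((y : ℕ) + 1) ≤ cdf p π (k₀ : ℕ) := aux_cdf_mono p hp π hy1
    have hy' := (Finset.mem_filter.1 hy).2
    linarith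
  have hsi : selIdx p ξ π = some k₀ := by
    rw [selIdx]
    simp only [← hs, dif_pos hne, hmin]
  rw [sel, hsi]
  rfl

lemma aux_cdf_eq [Fintype V] (p : V → ℝ) (σ : Fin (Fintype.card V) ≃ V) (k : ℕ) :
    cdf p σ k = ∑ w ∈ Finset.univ.filter (fun w => ((σ.symm w : Fin (Fintype.card V)) : ℕ) < k), p w := by
  rw [cdf]
  refine Finset.sum_equiv σ (fun i => ?_) (fun i _ => rfl)
  simp

lemma aux_cdf_ge [Fintype V] (p : V → ℝ) (hp : ∀ v, 0 ≤ p v)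
    (σ : Fin (Fintype.card V) ≃ V) (k : ℕ) (T : Finset V) :
    ∑ w ∈ T.filter (fun w => ((σ.symm w : Fin (Fintype.card V)) : ℕ) < k), p w ≤ cdf p σ k := by
  rw [aux_cdf_eq]
  apply Finset.sum_le_sum_of_subset_of_nonneg
  · exact Finset.filter_subset_filter _ (Finset.subset_univ T)
  · exact fun i _ _ => hp _

lemma aux_cdf_le [Fintype V] (p : V → ℝ) (hp : ∀ v, 0 ≤ p v)
    (σ : Fin (Fintype.card V) ≃ V) (k : ℕ) (T : Finset V) {ε : ℝ} (hε0 : 0 ≤ ε)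
    (hsmall : ∀ w ∉ T, p w ≤ ε) :
    cdf p σ k ≤ (∑ w ∈ T.filter (fun w => ((σ.symm w : Fin (Fintype.card V)) : ℕ) < k), p w)
      + (Fintype.card V : ℝ) * ε := by
  classical
  rw [aux_cdf_eq]
  set P := fun w : V => ((σ.symm w : Fin (Fintype.card V)) : ℕ) < k with hP
  have hsub : T.filter P ⊆ Finset.univ.filter P :=
    Finset.filter_subset_filter _ (Finset.subset_univ T)
  rw [← Finset.sum_sdiff hsub]
  have hbound : ∑ w ∈ (Finset.univ.filter P) \ (T.filter P), p w ≤ (Fintype.card V : ℝ) * ε := by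
    calc ∑ w ∈ (Finset.univ.filter P) \ (T.filter P), p w
        ≤ ∑ _w ∈ (Finset.univ.filter P) \ (T.filter P), ε := by
          refine Finset.sum_le_sum fun w hw => ?_
          rw [Finset.mem_sdiff] at hw
          refine hsmall w fun hwT => hw.2 ?_
          exact Finset.mem_filter.2 ⟨hwT, (Finset.mem_filter.1 hw.1).2⟩
      _ = (((Finset.univ.filter P) \ (T.filter P)).card : ℝ) * ε := by
          rw [Finset.sum_const, nsmul_eq_mul]
      _ ≤ (Fintype.card V : ℝ) * ε := by
          apply mul_le_mul_of_nonneg_right _ hε0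
          exact_mod_cast Finset.card_le_univ _
  linarith

lemma aux_master [Fintype V] [Nonempty V] (h3 : 3 ≤ Fintype.card V)
    (ξ ξh : ℝ) (π πh : Fin (Fintype.card V) ≃ V)
    (h : ∃ N : Set (V → ℝ), μH[(Fintype.card V - 1 : ℝ)] N = 0 ∧
      ∀ p ∈ stdSimplex ℝ V, p ∉ N → sel p ξ π = sel p ξh πh)
    (p₀ : V → ℝ) (hpos : ∀ v, 0 < p₀ v) (hsum : ∑ v, p₀ v = 1)
    (k₀ m₀ : Fin (Fintype.card V))
    (hk1 : cdf p₀ π (k₀ : ℕ) < ξ) (hk2 : ξ < cdf p₀ π ((k₀ : ℕ) + 1))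
    (hm1 : cdf p₀ πh (m₀ : ℕ) < ξh) (hm2 : ξh < cdf p₀ πh ((m₀ : ℕ) + 1))
    (hne : π k₀ ≠ πh m₀) : False := by
  classical
  obtain ⟨N, hN0, hNsel⟩ := h
  -- the injection of `Fin (card V - 1)` into `V` missing `v₀`
  set v₀ : V := π ⟨Fintype.card V - 1, by omega⟩ with hv₀
  set e : Fin (Fintype.card V - 1) → V :=
    fun i => π (Fin.castLE (Nat.sub_le (Fintype.card V) 1) i) with he
  have he_inj : Function.Injective e := fun i j hij => by
    have := π.injective hij
    exact Fin.castLE_injective _ this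
  have he_ne : ∀ i, e i ≠ v₀ := by
    intro i hiv
    have := π.injective hiv
    have h2 := congrArg Fin.val this
    simp only [Fin.coe_castLE] at h2
    omega
  set φ : (Fin (Fintype.card V - 1) → ℝ) → (V → ℝ) := fun t v =>
    p₀ v + ((∑ i, if v = e i then t i else 0) - (if v = v₀ then ∑ i, t i else 0)) with hφ
  have hφ0 : φ 0 = p₀ := funext fun v => by simp [hφ]
  have hφe : ∀ t i, φ t (e i) = p₀ (e i) + t i := by
    intro t i
    simp only [hφ, if_neg (he_ne i), he_inj.eq_iff]
    rw [Finset.sum_ite_eq]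
    simp
  have hφsum : ∀ t, ∑ v, φ t v = 1 := by
    intro t
    simp only [hφ]
    rw [Finset.sum_add_distrib, Finset.sum_sub_distrib, Finset.sum_comm, hsum]
    simp [Finset.sum_ite_eq']
  have hφc : ∀ v, Continuous fun t => φ t v := by
    intro v
    simp only [hφ]
    apply continuous_const.add
    apply Continuous.sub
    · apply continuous_finset_sum
      intro i _
      split_ifs
      · exact continuous_apply i
      · exact continuous_const
    · split_ifs
      · exact continuous_finset_sum _ fun i _ => continuous_apply i
      · exact continuous_const
  have hcdfc : ∀ (σ : Fin (Fintype.card V) ≃ V) (k : ℕ),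
      Continuous fun t => cdf (φ t) σ k := by
    intro σ k
    show Continuous fun t =>
      ∑ i ∈ Finset.univ.filter (fun i : Fin (Fintype.card V) => (i : ℕ) < k), φ t (σ i)
    exact continuous_finset_sum _ fun i _ => hφc (σ i)
  set O : Set (Fin (Fintype.card V - 1) → ℝ) := {t | (∀ v, 0 < φ t v) ∧
      cdf (φ t) π (k₀ : ℕ) < ξ ∧ ξ < cdf (φ t) π ((k₀ : ℕ) + 1) ∧
      cdf (φ t) πh (m₀ : ℕ) < ξh ∧ ξh < cdf (φ t) πh ((m₀ : ℕ) + 1)} with hO_def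
  have hO : IsOpen O := by
    rw [hO_def]
    simp only [Set.setOf_and]
    refine IsOpen.inter ?_ (IsOpen.inter ?_ (IsOpen.inter ?_ (IsOpen.inter ?_ ?_)))
    · rw [Set.setOf_forall]
      exact isOpen_iInter_of_finite fun v => isOpen_lt continuous_const (hφc v)
    · exact isOpen_lt (hcdfc π (k₀ : ℕ)) continuous_const
    · exact isOpen_lt continuous_const (hcdfc π ((k₀ : ℕ) + 1))
    · exact isOpen_lt (hcdfc πh (m₀ : ℕ)) continuous_const
    · exact isOpen_lt continuous_const (hcdfc πh ((m₀ : ℕ) + 1))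
  have h0O : (0 : Fin (Fintype.card V - 1) → ℝ) ∈ O := by
    rw [hO_def]
    exact ⟨fun v => hφ0 ▸ hpos v, hφ0 ▸ hk1, hφ0 ▸ hk2, hφ0 ▸ hm1, hφ0 ▸ hm2⟩
  have hsub : φ '' O ⊆ N := by
    rintro _ ⟨t, ht, rfl⟩
    obtain ⟨htpos, ht1, ht2, ht3, ht4⟩ := ht
    by_contra hmem
    have hsimplex : φ t ∈ stdSimplex ℝ V := ⟨fun v => (htpos v).le, hφsum t⟩
    have heq := hNsel (φ t) hsimplex hmem
    rw [aux_sel_eq _ (fun v => (htpos v).le) _ _ k₀ ht1 ht2.le,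
        aux_sel_eq _ (fun v => (htpos v).le) _ _ m₀ ht3 ht4.le] at heq
    exact hne heq
  -- measure-theoretic contradiction
  set ψ : (V → ℝ) → (Fin (Fintype.card V - 1) → ℝ) := fun q i => q (e i) - p₀ (e i) with hψdef
  have hψφ : ∀ t, ψ (φ t) = t := by
    intro t
    funext i
    simp [hψdef, hφe]
  have hψ : LipschitzWith 1 ψ := by
    refine LipschitzWith.of_dist_le_mul fun q q' => ?_
    rw [NNReal.coe_one, one_mul]
    refine (dist_pi_le_iff dist_nonneg).2 fun i => ?_
    simp only [hψdef]
    rw [dist_sub_right]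
    exact dist_le_pi_dist q q' (e i)
  have hd0 : (0 : ℝ) ≤ (Fintype.card V : ℝ) - 1 := by
    have : (3 : ℝ) ≤ (Fintype.card V : ℝ) := by exact_mod_cast h3
    linarith
  have hcast : ((Fintype.card V : ℝ) - 1)
      = ((Fintype.card (Fin (Fintype.card V - 1)) : ℕ) : ℝ) := by
    rw [Fintype.card_fin, Nat.cast_sub (by omega)]
    norm_num
  have hHO : μH[(Fintype.card V : ℝ) - 1] O = volume O := by
    rw [hcast, hausdorffMeasure_pi_real]
  have himg : O = ψ '' (φ '' O) := by
    rw [Set.image_image]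
    have : (fun t => ψ (φ t)) = id := funext hψφ
    rw [this, Set.image_id]
  have hle1 : μH[(Fintype.card V : ℝ) - 1] O ≤ μH[(Fintype.card V : ℝ) - 1] (φ '' O) := by
    calc μH[(Fintype.card V : ℝ) - 1] O
        = μH[(Fintype.card V : ℝ) - 1] (ψ '' (φ '' O)) := by rw [← himg]
      _ ≤ (1 : NNReal) ^ ((Fintype.card V : ℝ) - 1) * μH[(Fintype.card V : ℝ) - 1] (φ '' O) :=
          hψ.hausdorffMeasure_image_le hd0 _
      _ = μH[(Fintype.card V : ℝ) - 1] (φ '' O) := by simp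
  have hle2 : μH[(Fintype.card V : ℝ) - 1] (φ '' O) ≤ μH[(Fintype.card V : ℝ) - 1] N :=
    measure_mono hsub
  have hvolpos : 0 < volume O := hO.measure_pos volume ⟨0, h0O⟩
  have hzero : volume O = 0 := by
    refine le_antisymm ?_ zero_le
    calc volume O = μH[(Fintype.card V : ℝ) - 1] O := hHO.symm
      _ ≤ μH[(Fintype.card V : ℝ) - 1] (φ '' O) := hle1
      _ ≤ μH[(Fintype.card V : ℝ) - 1] N := hle2
      _ = 0 := hN0
  exact hvolpos.ne' hzero

lemma aux_pairlt [Fintype V] [Nonempty V] (h3 : 3 ≤ Fintype.card V)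
    (ξ ξh : ℝ) (hξ0 : 0 < ξ) (hξ1 : ξ < 1) (hξh0 : 0 < ξh) (hξh1 : ξh < 1)
    (π πh : Fin (Fintype.card V) ≃ V)
    (h : ∃ N : Set (V → ℝ), μH[(Fintype.card V - 1 : ℝ)] N = 0 ∧
      ∀ p ∈ stdSimplex ℝ V, p ∉ N → sel p ξ π = sel p ξh πh)
    (u v : V) (huv : u ≠ v)
    (hlt : (if π.symm u < π.symm v then ξ else 1 - ξ)
      < (if πh.symm u < πh.symm v then ξh else 1 - ξh)) : False := by
  classical
  set τ1 := (if π.symm u < π.symm v then ξ else 1 - ξ) with hτ1def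
  set τ2 := (if πh.symm u < πh.symm v then ξh else 1 - ξh) with hτ2def
  have hτ10 : 0 < τ1 := by rw [hτ1def]; split_ifs <;> linarith
  have hτ11 : τ1 < 1 := by rw [hτ1def]; split_ifs <;> linarith
  have hτ20 : 0 < τ2 := by rw [hτ2def]; split_ifs <;> linarith
  have hτ21 : τ2 < 1 := by rw [hτ2def]; split_ifs <;> linarith
  set t := (τ1 + τ2) / 2 with htdef
  have ht1 : τ1 < t := by rw [htdef]; linarith
  have ht2 : t < τ2 := by rw [htdef]; linarith
  have ht0 : 0 < t := lt_trans hτ10 ht1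
  have htl1 : t < 1 := lt_trans ht2 hτ21
  set δ := min (min (t - τ1) (τ2 - t)) (min (min ξ (1 - ξ)) (min ξh (1 - ξh))) with hδdef
  have hδ0 : 0 < δ := by
    refine lt_min (lt_min ?_ ?_) (lt_min (lt_min ?_ ?_) (lt_min ?_ ?_)) <;> linarith
  have hδ1 : δ ≤ t - τ1 := le_trans (min_le_left _ _) (min_le_left _ _)
  have hδ2 : δ ≤ τ2 - t := le_trans (min_le_left _ _) (min_le_right _ _)
  have hδ3 : δ ≤ ξ := le_trans (min_le_right _ _) (le_trans (min_le_left _ _) (min_le_left _ _))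
  have hδ4 : δ ≤ 1 - ξ := le_trans (min_le_right _ _) (le_trans (min_le_left _ _) (min_le_right _ _))
  have hδ5 : δ ≤ ξh := le_trans (min_le_right _ _) (le_trans (min_le_right _ _) (min_le_left _ _))
  have hδ6 : δ ≤ 1 - ξh := le_trans (min_le_right _ _) (le_trans (min_le_right _ _) (min_le_right _ _))
  have hcard0 : (0 : ℝ) < (Fintype.card V : ℝ) := by
    have : (3 : ℝ) ≤ (Fintype.card V : ℝ) := by exact_mod_cast h3
    linarith
  have hcard3 : (3 : ℝ) ≤ (Fintype.card V : ℝ) := by exact_mod_cast h3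
  set ε := δ / (2 * (Fintype.card V : ℝ)) with hεdef
  have hε0 : 0 < ε := by rw [hεdef]; positivity
  have hnε : (Fintype.card V : ℝ) * ε = δ / 2 := by
    rw [hεdef]; field_simp
  have hn2ε0 : 0 ≤ ((Fintype.card V : ℝ) - 2) * ε := by nlinarith
  have hn2ε : ((Fintype.card V : ℝ) - 2) * ε ≤ δ / 2 := by nlinarith
  set s := 1 - t - ((Fintype.card V : ℝ) - 2) * ε with hsdef
  have hs0 : 0 < s := by rw [hsdef]; nlinarith
  set p₀ : V → ℝ := fun r => if r = u then t else if r = v then s else ε with hp₀def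
  have hp₀u : p₀ u = t := by simp [hp₀def]
  have hp₀v : p₀ v = s := by simp [hp₀def, huv.symm]
  have hp₀o : ∀ r, r ≠ u → r ≠ v → p₀ r = ε := by
    intro r h1 h2; simp [hp₀def, h1, h2]
  have hp0 : ∀ r, 0 < p₀ r := by
    intro r
    rcases eq_or_ne r u with rfl | h1
    · rw [hp₀u]; exact ht0
    rcases eq_or_ne r v with rfl | h2
    · rw [hp₀v]; exact hs0
    · rw [hp₀o r h1 h2]; exact hε0
  have hsmall : ∀ w ∉ ({u, v} : Finset V), p₀ w ≤ ε := by
    intro w hw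
    simp only [Finset.mem_insert, Finset.mem_singleton, not_or] at hw
    rw [hp₀o w hw.1 hw.2]
  have hsum : ∑ r, p₀ r = 1 := by
    rw [← Finset.sum_sdiff (Finset.subset_univ ({u, v} : Finset V))]
    have h1 : ∑ r ∈ ({u, v} : Finset V), p₀ r = t + s := by
      rw [Finset.sum_pair huv, hp₀u, hp₀v]
    have h2 : ∑ r ∈ Finset.univ \ ({u, v} : Finset V), p₀ r
        = ((Fintype.card V - 2 : ℕ) : ℝ) * ε := by
      rw [Finset.sum_congr rfl (fun r hr => by
        simp only [Finset.mem_sdiff, Finset.mem_insert, Finset.mem_singleton, not_or] at hr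
        exact hp₀o r hr.2.1 hr.2.2)]
      rw [Finset.sum_const, nsmul_eq_mul]
      congr 2
      rw [Finset.card_sdiff_of_subset (Finset.subset_univ _), Finset.card_pair huv, Finset.card_univ]
    rw [h1, h2, Nat.cast_sub (by omega)]
    rw [hsdef]
    push_cast
    ring
  have hB : ∀ (σ : Fin (Fintype.card V) ≃ V) (k : ℕ),
      ∑ w ∈ ({u, v} : Finset V).filter
        (fun w => ((σ.symm w : Fin (Fintype.card V)) : ℕ) < k), p₀ w
      = (if ((σ.symm u : Fin (Fintype.card V)) : ℕ) < k then t else 0)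
        + (if ((σ.symm v : Fin (Fintype.card V)) : ℕ) < k then s else 0) := by
    intro σ k
    rw [Finset.sum_filter, Finset.sum_pair huv, hp₀u, hp₀v]
  set iu := ((π.symm u : Fin (Fintype.card V)) : ℕ) with hiu
  set iv := ((π.symm v : Fin (Fintype.card V)) : ℕ) with hiv
  set ju := ((πh.symm u : Fin (Fintype.card V)) : ℕ) with hju
  set jv := ((πh.symm v : Fin (Fintype.card V)) : ℕ) with hjv
  have hiuv : iu ≠ iv := by
    intro hh
    exact huv (by
      have : π.symm u = π.symm v := Fin.ext hh
      have := congrArg π this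
      simpa using this)
  have hjuv : ju ≠ jv := by
    intro hh
    exact huv (by
      have : πh.symm u = πh.symm v := Fin.ext hh
      have := congrArg πh this
      simpa using this)
  have hτ1lt : τ1 < t := ht1
  have hτ2gt : t < τ2 := ht2
  refine aux_master h3 ξ ξh π πh h p₀ hp0 hsum (π.symm u) (πh.symm v) ?_ ?_ ?_ ?_ ?_
  · -- cdf p₀ π iu < ξ
    refine lt_of_le_of_lt (aux_cdf_le p₀ (fun r => (hp0 r).le) π iu ({u, v}) hε0.le hsmall) ?_
    rw [hB π iu, hnε]
    rcases lt_or_gt_of_ne hiuv with hc | hc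
    · have hττ : τ1 = ξ := by rw [hτ1def, if_pos (Fin.lt_def.2 hc)]
      rw [if_neg (by omega), if_neg (by omega)]
      linarith
    · have hττ : τ1 = 1 - ξ := by
        rw [hτ1def, if_neg (by rw [Fin.lt_def]; omega)]
      rw [if_neg (by omega), if_pos (by omega), hsdef]
      linarith
  · -- ξ < cdf p₀ π (iu + 1)
    refine lt_of_lt_of_le ?_ (aux_cdf_ge p₀ (fun r => (hp0 r).le) π (iu + 1) ({u, v}))
    rw [hB π (iu + 1)]
    rcases lt_or_gt_of_ne hiuv with hc | hc
    · have hττ : τ1 = ξ := by rw [hτ1def, if_pos (Fin.lt_def.2 hc)]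
      rw [if_pos (by omega), if_neg (by omega)]
      linarith
    · have hττ : τ1 = 1 - ξ := by
        rw [hτ1def, if_neg (by rw [Fin.lt_def]; omega)]
      rw [if_pos (by omega), if_pos (by omega), hsdef]
      linarith
  · -- cdf p₀ πh jv < ξh
    refine lt_of_le_of_lt (aux_cdf_le p₀ (fun r => (hp0 r).le) πh jv ({u, v}) hε0.le hsmall) ?_
    rw [hB πh jv, hnε]
    rcases lt_or_gt_of_ne hjuv with hc | hc
    · have hττ : τ2 = ξh := by rw [hτ2def, if_pos (Fin.lt_def.2 hc)]
      rw [if_pos (by omega), if_neg (by omega)]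
      linarith
    · have hττ : τ2 = 1 - ξh := by
        rw [hτ2def, if_neg (by rw [Fin.lt_def]; omega)]
      rw [if_neg (by omega), if_neg (by omega)]
      linarith
  · -- ξh < cdf p₀ πh (jv + 1)
    refine lt_of_lt_of_le ?_ (aux_cdf_ge p₀ (fun r => (hp0 r).le) πh (jv + 1) ({u, v}))
    rw [hB πh (jv + 1)]
    rcases lt_or_gt_of_ne hjuv with hc | hc
    · have hττ : τ2 = ξh := by rw [hτ2def, if_pos (Fin.lt_def.2 hc)]
      rw [if_pos (by omega), if_pos (by omega), hsdef]
      linarith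
    · have hττ : τ2 = 1 - ξh := by
        rw [hτ2def, if_neg (by rw [Fin.lt_def]; omega)]
      rw [if_neg (by omega), if_pos (by omega), hsdef]
      linarith
  · -- π (π.symm u) ≠ πh (πh.symm v)
    simpa using huv

lemma aux_half [Fintype V] [Nonempty V] (h3 : 3 ≤ Fintype.card V)
    (ξ ξh : ℝ) (hξ : ξ = 1 / 2) (hξh : ξh = 1 / 2)
    (π πh : Fin (Fintype.card V) ≃ V)
    (h : ∃ N : Set (V → ℝ), μH[(Fintype.card V - 1 : ℝ)] N = 0 ∧
      ∀ p ∈ stdSimplex ℝ V, p ∉ N → sel p ξ π = sel p ξh πh)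
    (u v w x y z : V)
    (hx : x = u ∨ x = v ∨ x = w) (hy : y = u ∨ y = v ∨ y = w) (hz : z = u ∨ z = v ∨ z = w)
    (huv : u ≠ v) (huw : u ≠ w) (hvw : v ≠ w)
    (hxy : x ≠ y) (hxz : x ≠ z) (hyz : y ≠ z)
    (hπ1 : π.symm u < π.symm v) (hπ2 : π.symm v < π.symm w)
    (hπh1 : πh.symm x < πh.symm y) (hπh2 : πh.symm y < πh.symm z)
    (hyv : y ≠ v) : False := by
  classical
  subst hξ hξh
  have hcard0 : (0 : ℝ) < (Fintype.card V : ℝ) := by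
    have : (3 : ℝ) ≤ (Fintype.card V : ℝ) := by exact_mod_cast h3
    linarith
  have hcard3 : (3 : ℝ) ≤ (Fintype.card V : ℝ) := by exact_mod_cast h3
  set ε := 1 / (12 * (Fintype.card V : ℝ)) with hεdef
  have hε0 : 0 < ε := by rw [hεdef]; positivity
  have hnε : (Fintype.card V : ℝ) * ε = 1 / 12 := by
    rw [hεdef]; field_simp
  have hn3ε0 : 0 ≤ ((Fintype.card V : ℝ) - 3) * ε := by nlinarith
  have hn3ε : ((Fintype.card V : ℝ) - 3) * ε ≤ 1 / 12 := by nlinarith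
  set m := (1 - ((Fintype.card V : ℝ) - 3) * ε) / 3 with hmdef
  have hm13 : m ≤ 1 / 3 := by rw [hmdef]; linarith
  have hm11 : 11 / 36 ≤ m := by rw [hmdef]; linarith
  have hm0 : 0 < m := by linarith
  have hεm : ε ≤ m := by
    have : ε ≤ 1 / 12 := by nlinarith
    linarith
  set p₀ : V → ℝ := fun r => if r = u ∨ r = v ∨ r = w then m else ε with hp₀def
  have hp₀u : p₀ u = m := by simp [hp₀def]
  have hp₀v : p₀ v = m := by simp [hp₀def]
  have hp₀w : p₀ w = m := by simp [hp₀def]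
  have hp₀x : p₀ x = m := by rw [hp₀def]; simp only []; rw [if_pos hx]
  have hp₀y : p₀ y = m := by rw [hp₀def]; simp only []; rw [if_pos hy]
  have hp₀z : p₀ z = m := by rw [hp₀def]; simp only []; rw [if_pos hz]
  have hp₀o : ∀ r, r ≠ u → r ≠ v → r ≠ w → p₀ r = ε := by
    intro r h1 h2 h3'
    rw [hp₀def]
    simp [h1, h2, h3']
  have hp0 : ∀ r, 0 < p₀ r := by
    intro r
    rw [hp₀def]
    simp only []
    split_ifs
    · exact hm0
    · exact hε0
  have hsmall : ∀ r ∉ ({u, v, w} : Finset V), p₀ r ≤ ε := by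
    intro r hr
    simp only [Finset.mem_insert, Finset.mem_singleton, not_or] at hr
    rw [hp₀o r hr.1 hr.2.1 hr.2.2]
  have hcarduvw : ({u, v, w} : Finset V).card = 3 := by
    rw [Finset.card_insert_of_notMem (by simp [huv, huw]),
      Finset.card_pair hvw]
  have hT : ({x, y, z} : Finset V) = ({u, v, w} : Finset V) := by
    apply Finset.eq_of_subset_of_card_le
    · intro r hr
      simp only [Finset.mem_insert, Finset.mem_singleton] at hr ⊢
      rcases hr with rfl | rfl | rfl
      · exact hx
      · exact hy
      · exact hz
    · rw [hcarduvw, Finset.card_insert_of_notMem (by simp [hxy, hxz]),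
        Finset.card_pair hyz]
  have hsmall' : ∀ r ∉ ({x, y, z} : Finset V), p₀ r ≤ ε := by
    rw [hT]; exact hsmall
  have hsum : ∑ r, p₀ r = 1 := by
    rw [← Finset.sum_sdiff (Finset.subset_univ ({u, v, w} : Finset V))]
    have h1 : ∑ r ∈ ({u, v, w} : Finset V), p₀ r = 3 * m := by
      rw [Finset.sum_insert (by simp [huv, huw]), Finset.sum_pair hvw, hp₀u, hp₀v, hp₀w]
      ring
    have h2 : ∑ r ∈ Finset.univ \ ({u, v, w} : Finset V), p₀ r
        = ((Fintype.card V - 3 : ℕ) : ℝ) * ε := by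
      rw [Finset.sum_congr rfl (fun r hr => by
        simp only [Finset.mem_sdiff, Finset.mem_insert, Finset.mem_singleton, not_or] at hr
        exact hp₀o r hr.2.1 hr.2.2.1 hr.2.2.2)]
      rw [Finset.sum_const, nsmul_eq_mul]
      congr 2
      rw [Finset.card_sdiff_of_subset (Finset.subset_univ _), hcarduvw, Finset.card_univ]
    rw [h1, h2, Nat.cast_sub (by omega), hmdef]
    push_cast
    ring
  have hB : ∀ (σ : Fin (Fintype.card V) ≃ V) (a b c : V), a ≠ b → a ≠ c → b ≠ c →
      ∀ k : ℕ,
      ∑ r ∈ ({a, b, c} : Finset V).filter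
        (fun r => ((σ.symm r : Fin (Fintype.card V)) : ℕ) < k), p₀ r
      = (if ((σ.symm a : Fin (Fintype.card V)) : ℕ) < k then p₀ a else 0)
        + ((if ((σ.symm b : Fin (Fintype.card V)) : ℕ) < k then p₀ b else 0)
          + (if ((σ.symm c : Fin (Fintype.card V)) : ℕ) < k then p₀ c else 0)) := by
    intro σ a b c hab hac hbc k
    rw [Finset.sum_filter, Finset.sum_insert (by simp [hab, hac]), Finset.sum_pair hbc]
  have hiuv : ((π.symm u : Fin (Fintype.card V)) : ℕ) < ((π.symm v : Fin (Fintype.card V)) : ℕ) :=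
    Fin.lt_def.1 hπ1
  have hivw : ((π.symm v : Fin (Fintype.card V)) : ℕ) < ((π.symm w : Fin (Fintype.card V)) : ℕ) :=
    Fin.lt_def.1 hπ2
  have hjxy : ((πh.symm x : Fin (Fintype.card V)) : ℕ) < ((πh.symm y : Fin (Fintype.card V)) : ℕ) :=
    Fin.lt_def.1 hπh1
  have hjyz : ((πh.symm y : Fin (Fintype.card V)) : ℕ) < ((πh.symm z : Fin (Fintype.card V)) : ℕ) :=
    Fin.lt_def.1 hπh2
  refine aux_master h3 (1 / 2) (1 / 2) π πh h p₀ hp0 hsum (π.symm v) (πh.symm y) ?_ ?_ ?_ ?_ ?_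
  · refine lt_of_le_of_lt (aux_cdf_le p₀ (fun r => (hp0 r).le) π _ ({u, v, w}) hε0.le hsmall) ?_
    rw [hB π u v w huv huw hvw, hp₀u, hp₀v, hp₀w,
      if_pos hiuv, if_neg (by omega), if_neg (by omega), hnε]
    linarith
  · refine lt_of_lt_of_le ?_ (aux_cdf_ge p₀ (fun r => (hp0 r).le) π _ ({u, v, w}))
    rw [hB π u v w huv huw hvw, hp₀u, hp₀v, hp₀w,
      if_pos (by omega), if_pos (by omega)]
    split_ifs <;> linarith
  · refine lt_of_le_of_lt (aux_cdf_le p₀ (fun r => (hp0 r).le) πh _ ({x, y, z}) hε0.le hsmall') ?_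
    rw [hB πh x y z hxy hxz hyz, hp₀x, hp₀y, hp₀z,
      if_pos hjxy, if_neg (by omega), if_neg (by omega), hnε]
    linarith
  · refine lt_of_lt_of_le ?_ (aux_cdf_ge p₀ (fun r => (hp0 r).le) πh _ ({x, y, z}))
    rw [hB πh x y z hxy hxz hyz, hp₀x, hp₀y, hp₀z,
      if_pos (by omega), if_pos (by omega)]
    split_ifs <;> linarith
  · simpa using hyv.symm

lemma aux_perm_id {n : ℕ} (f : Fin n ≃ Fin n) (hf : StrictMono (f : Fin n → Fin n)) :
    ∀ i : Fin n, f i = i := by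
  suffices H : ∀ m : ℕ, ∀ i : Fin n, i.val = m → f i = i from fun i => H i.val i rfl
  intro m
  induction m using Nat.strong_induction_on with
  | _ m IH =>
    intro i him
    have IH' : ∀ j : Fin n, j < i → f j = j := fun j hj => IH j.val (by
      rw [← him]; exact Fin.lt_def.1 hj) j rfl
    have h1 : i ≤ f i := by
      by_contra hlt
      push_neg at hlt
      have hfix := IH' (f i) hlt
      have h2 := f.injective hfix
      rw [h2] at hlt
      exact lt_irrefl i hlt
    have h2 : f i ≤ i := by
      by_contra hlt
      push_neg at hlt
      have hk : f (f.symm i) = i := f.apply_symm_apply i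
      have hki : ¬ f.symm i < i := by
        intro hk'
        have h5 := IH' (f.symm i) hk'
        rw [hk] at h5
        rw [← h5] at hk'
        exact lt_irrefl _ hk'
      have hkne : f.symm i ≠ i := by
        intro e
        rw [e] at hk
        rw [hk] at hlt
        exact lt_irrefl i hlt
      have h6 : i < f.symm i := lt_of_le_of_ne (not_lt.1 hki) (Ne.symm hkne)
      have h7 := hf h6
      rw [hk] at h7
      exact lt_irrefl i (lt_trans hlt h7)
    exact le_antisymm h2 h1

lemma aux_btw_mono {n : ℕ} (h3 : 3 ≤ n) (f : Fin n ≃ Fin n)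
    (H : ∀ i j k : Fin n, i < j → j < k →
      (f i < f j ∧ f j < f k) ∨ (f k < f j ∧ f j < f i))
    (h01 : f ⟨0, by omega⟩ < f ⟨1, by omega⟩) : StrictMono (f : Fin n → Fin n) := by
  have Q : ∀ j : ℕ, ∀ hj : j + 1 < n, f ⟨j, by omega⟩ < f ⟨j + 1, hj⟩ := by
    intro j
    induction j with
    | zero => intro hj; exact h01
    | succ j ih =>
      intro hj
      have hprev := ih (by omega)
      rcases H ⟨j, by omega⟩ ⟨j + 1, by omega⟩ ⟨j + 2, by omega⟩
        (by simp [Fin.lt_def]) (by simp [Fin.lt_def]) with ⟨a, b⟩ | ⟨a, b⟩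
      · exact b
      · exact absurd hprev (asymm b)
  obtain ⟨m, hnm⟩ : ∃ m, n = m + 1 := ⟨n - 1, by omega⟩
  subst hnm
  rw [Fin.strictMono_iff_lt_succ]
  intro i
  exact Q i.val (by omega)

lemma aux_btw {n : ℕ} (h3 : 3 ≤ n) (f : Fin n ≃ Fin n)
    (H : ∀ i j k : Fin n, i < j → j < k →
      (f i < f j ∧ f j < f k) ∨ (f k < f j ∧ f j < f i)) :
    (∀ i, f i = i) ∨ (∀ i, f i = i.rev) := by
  rcases lt_trichotomy (f ⟨0, by omega⟩) (f ⟨1, by omega⟩) with hc | hc | hc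
  · exact Or.inl (aux_perm_id f (aux_btw_mono h3 f H hc))
  · exact absurd (f.injective hc) (by simp [Fin.ext_iff])
  · right
    set g : Fin n ≃ Fin n := f.trans Fin.revPerm with hg
    have hgapp : ∀ i, g i = (f i).rev := fun i => by simp [hg]
    have Hg : ∀ i j k : Fin n, i < j → j < k →
        (g i < g j ∧ g j < g k) ∨ (g k < g j ∧ g j < g i) := by
      intro i j k hij hjk
      rcases H i j k hij hjk with ⟨a, b⟩ | ⟨a, b⟩
      · exact Or.inr ⟨by rw [hgapp, hgapp]; exact Fin.rev_lt_rev.2 b,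
          by rw [hgapp, hgapp]; exact Fin.rev_lt_rev.2 a⟩
      · exact Or.inl ⟨by rw [hgapp, hgapp]; exact Fin.rev_lt_rev.2 b,
          by rw [hgapp, hgapp]; exact Fin.rev_lt_rev.2 a⟩
    have hg01 : g ⟨0, by omega⟩ < g ⟨1, by omega⟩ := by
      rw [hgapp, hgapp]
      exact Fin.rev_lt_rev.2 hc
    intro i
    have h2 : g i = i := aux_perm_id g (aux_btw_mono h3 g Hg hg01) i
    rw [hgapp] at h2
    conv_rhs => rw [← h2]
    rw [Fin.rev_rev]

/-- main identifiability theorem: if the two parameterizations agree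
for almost every distribution on the simplex (w.r.t. its natural
`(|V|-1)`-dimensional measure), then either the parameters coincide, or the
permutation is reversed and the key is complemented. -/
theorem stmt7 [Fintype V] [Nonempty V] (h3 : 3 ≤ Fintype.card V)
    (ξ ξh : ℝ) (hξ0 : 0 < ξ) (hξ1 : ξ < 1) (hξh0 : 0 < ξh) (hξh1 : ξh < 1)
    (π πh : Fin (Fintype.card V) ≃ V)
    (h : ∃ N : Set (V → ℝ), μH[(Fintype.card V - 1 : ℝ)] N = 0 ∧
      ∀ p ∈ stdSimplex ℝ V, p ∉ N → sel p ξ π = sel p ξh πh) :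
    (π = πh ∧ ξ = ξh) ∨ (π = revp πh ∧ ξ = 1 - ξh) := by
  classical
  set f : Fin (Fintype.card V) ≃ Fin (Fintype.card V) := π.trans πh.symm with hfdef
  have hfapp : ∀ i, f i = πh.symm (π i) := fun i => rfl
  have pair : ∀ u v : V, u ≠ v →
      ¬ ((if π.symm u < π.symm v then ξ else 1 - ξ)
        < (if πh.symm u < πh.symm v then ξh else 1 - ξh)) :=
    fun u v huv hlt => aux_pairlt h3 ξ ξh hξ0 hξ1 hξh0 hξh1 π πh h u v huv hlt
  have hπne : ∀ i j : Fin (Fintype.card V), i ≠ j → π i ≠ π j :=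
    fun i j hij e => hij (π.injective e)
  by_cases hA : ξ = ξh
  · by_cases hB : ξ = 1 - ξh
    · -- ξ = ξh = 1/2 : use the median/triple argument
      have hhalf : ξ = 1 / 2 := by linarith
      have hhalfh : ξh = 1 / 2 := by linarith
      have H : ∀ i j k : Fin (Fintype.card V), i < j → j < k →
          (f i < f j ∧ f j < f k) ∨ (f k < f j ∧ f j < f i) := by
        intro i j k hij hjk
        have hik : i < k := lt_trans hij hjk
        have huv : π i ≠ π j := hπne _ _ (ne_of_lt hij)
        have huw : π i ≠ π k := hπne _ _ (ne_of_lt hik)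
        have hvw : π j ≠ π k := hπne _ _ (ne_of_lt hjk)
        have hπ1 : π.symm (π i) < π.symm (π j) := by simpa using hij
        have hπ2 : π.symm (π j) < π.symm (π k) := by simpa using hjk
        have hfij : f i ≠ f j := fun e => (ne_of_lt hij) (f.injective e)
        have hfjk : f j ≠ f k := fun e => (ne_of_lt hjk) (f.injective e)
        have hfik : f i ≠ f k := fun e => (ne_of_lt hik) (f.injective e)
        rcases lt_or_gt_of_ne hfij with h1 | h1 <;> rcases lt_or_gt_of_ne hfjk with h2 | h2
        · exact Or.inl ⟨h1, h2⟩
        · -- f i < f j, f k < f j : f j is the max, contradiction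
          exfalso
          rcases lt_or_gt_of_ne hfik with h4 | h4
          · -- order : f i < f k < f j, median token π k ≠ π j
            exact aux_half h3 ξ ξh hhalf hhalfh π πh h (π i) (π j) (π k)
              (π i) (π k) (π j) (Or.inl rfl) (Or.inr (Or.inr rfl)) (Or.inr (Or.inl rfl))
              huv huw hvw huw (hπne _ _ (ne_of_lt hij)) (hπne _ _ (ne_of_lt hjk)).symm
              hπ1 hπ2 h4 h2 hvw.symm
          · -- order : f k < f i < f j, median token π i ≠ π j
            exact aux_half h3 ξ ξh hhalf hhalfh π πh h (π i) (π j) (π k)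
              (π k) (π i) (π j) (Or.inr (Or.inr rfl)) (Or.inl rfl) (Or.inr (Or.inl rfl))
              huv huw hvw huw.symm hvw.symm huv
              hπ1 hπ2 h4 h1 huv
        · -- f j < f i, f j < f k : f j is the min, contradiction
          exfalso
          rcases lt_or_gt_of_ne hfik with h4 | h4
          · -- order : f j < f i < f k, median token π i ≠ π j
            exact aux_half h3 ξ ξh hhalf hhalfh π πh h (π i) (π j) (π k)
              (π j) (π i) (π k) (Or.inr (Or.inl rfl)) (Or.inl rfl) (Or.inr (Or.inr rfl))
              huv huw hvw huv.symm hvw huw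
              hπ1 hπ2 h1 h4 huv
          · -- order : f j < f k < f i, median token π k ≠ π j
            exact aux_half h3 ξ ξh hhalf hhalfh π πh h (π i) (π j) (π k)
              (π j) (π k) (π i) (Or.inr (Or.inl rfl)) (Or.inr (Or.inr rfl)) (Or.inl rfl)
              huv huw hvw hvw huv.symm huw.symm
              hπ1 hπ2 h2 h4 hvw.symm
        · exact Or.inr ⟨h2, h1⟩
      rcases aux_btw h3 f H with hid | hrev
      · left
        refine ⟨Equiv.ext fun i => ?_, hA⟩
        have h2 := hid i
        rw [hfapp] at h2
        simpa using congrArg πh h2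
      · right
        refine ⟨Equiv.ext fun i => ?_, hB⟩
        have h2 := hrev i
        rw [hfapp] at h2
        have h4 := congrArg πh h2
        simp only [Equiv.apply_symm_apply] at h4
        rw [h4]
        simp [revp]
    · -- ξ = ξh, ξ ≠ 1 - ξh : identical order
      left
      have hmono : StrictMono (f : Fin (Fintype.card V) → Fin (Fintype.card V)) := by
        intro i j hij
        have hfij : f i ≠ f j := fun e => (ne_of_lt hij) (f.injective e)
        rcases lt_or_gt_of_ne hfij with hc | hc
        · exact hc
        · exfalso
          rcases lt_or_gt_of_ne hB with hlt' | hlt'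
          · refine pair (π i) (π j) (hπne _ _ (ne_of_lt hij)) ?_
            rw [if_pos (show π.symm (π i) < π.symm (π j) by simpa using hij),
              if_neg (show ¬ πh.symm (π i) < πh.symm (π j) from asymm hc)]
            exact hlt'
          · refine pair (π j) (π i) (hπne _ _ (ne_of_lt hij)).symm ?_
            rw [if_neg (show ¬ π.symm (π j) < π.symm (π i) by simpa using asymm hij),
              if_pos (show πh.symm (π j) < πh.symm (π i) from hc)]
            linarith
      refine ⟨Equiv.ext fun i => ?_, hA⟩
      have h2 := aux_perm_id f hmono i
      rw [hfapp] at h2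
      simpa using congrArg πh h2
  · by_cases hB : ξ = 1 - ξh
    · -- ξ = 1 - ξh, ξ ≠ ξh : reversed order
      right
      have hanti : ∀ i j : Fin (Fintype.card V), i < j → f j < f i := by
        intro i j hij
        have hfij : f i ≠ f j := fun e => (ne_of_lt hij) (f.injective e)
        rcases lt_or_gt_of_ne hfij with hc | hc
        · exfalso
          rcases lt_or_gt_of_ne hA with hlt' | hlt'
          · refine pair (π i) (π j) (hπne _ _ (ne_of_lt hij)) ?_
            rw [if_pos (show π.symm (π i) < π.symm (π j) by simpa using hij),
              if_pos (show πh.symm (π i) < πh.symm (π j) from hc)]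
            exact hlt'
          · refine pair (π j) (π i) (hπne _ _ (ne_of_lt hij)).symm ?_
            rw [if_neg (show ¬ π.symm (π j) < π.symm (π i) by simpa using asymm hij),
              if_neg (show ¬ πh.symm (π j) < πh.symm (π i) from asymm hc)]
            linarith
        · exact hc
      set g : Fin (Fintype.card V) ≃ Fin (Fintype.card V) := f.trans Fin.revPerm with hg
      have hgapp : ∀ i, g i = (f i).rev := fun i => by simp [hg]
      have hgmono : StrictMono (g : Fin (Fintype.card V) → Fin (Fintype.card V)) := by
        intro i j hij
        rw [hgapp, hgapp]
        exact Fin.rev_lt_rev.2 (hanti i j hij)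
      refine ⟨Equiv.ext fun i => ?_, hB⟩
      have h2 := aux_perm_id g hgmono i
      rw [hgapp] at h2
      have h4 : f i = i.rev := by
        conv_rhs => rw [← h2]
        rw [Fin.rev_rev]
      rw [hfapp] at h4
      have h5 := congrArg πh h4
      simp only [Equiv.apply_symm_apply] at h5
      rw [h5]
      simp [revp]
    · -- ξ ∉ {ξh, 1 - ξh} : contradiction
      exfalso
      have h01 : (⟨0, by omega⟩ : Fin (Fintype.card V)) < ⟨1, by omega⟩ := by
        simp [Fin.lt_def]
      set u := π ⟨0, by omega⟩ with hu
      set v := π ⟨1, by omega⟩ with hv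
      have huv : u ≠ v := hπne _ _ (ne_of_lt h01)
      have hπuv : π.symm u < π.symm v := by rw [hu, hv]; simpa using h01
      have hπhne : πh.symm u ≠ πh.symm v := fun e => huv (by
        have := congrArg πh e
        simpa using this)
      by_cases hcond : πh.symm u < πh.symm v
      · -- τ2 = ξh
        rcases lt_or_gt_of_ne hA with hlt' | hlt'
        · exact pair u v huv (by rw [if_pos hπuv, if_pos hcond]; exact hlt')
        · refine pair v u huv.symm ?_
          rw [if_neg (show ¬ π.symm v < π.symm u from asymm hπuv),
            if_neg (show ¬ πh.symm v < πh.symm u from asymm hcond)]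
          linarith
      · -- τ2 = 1 - ξh
        have hcond' : πh.symm v < πh.symm u := lt_of_le_of_ne (not_lt.1 hcond) hπhne.symm
        rcases lt_or_gt_of_ne hB with hlt' | hlt'
        · exact pair u v huv (by rw [if_pos hπuv, if_neg hcond]; exact hlt')
        · refine pair v u huv.symm ?_
          rw [if_neg (show ¬ π.symm v < π.symm u from asymm hπuv),
            if_pos hcond']
          linarith
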